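/- arXiv:1912.03246 — 5 statements merged into one kernel-verified Lean document; each statement's English description precedes it below -/
import Mathlib

section
/- Let A be a commutative ring, I an ideal of A, and hI a divided power structure on I. For all x, y ∈ I and every natural number m, the element hI.dpow (m+1) y − hI.dpow (m+1) x − (hI.dpow m x) · (y − x) lies in the ideal of A generated by the set {hI.dpow l (y − x) : l ≥ 2}. -/
theorem dpow_shift_mem_span {A : Type*} [CommRing A] {I : Ideal A}
    (hI : DividedPowers I) {x y : A} (hx : x ∈ I) (hy : y ∈ I) (m : ℕ) :
    hI.dpow (m + 1) y - hI.dpow (m + 1) x - hI.dpow m x * (y - x) ∈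
      Ideal.span {a : A | ∃ l : ℕ, 2 ≤ l ∧ a = hI.dpow l (y - x)} := by
  have hz : y - x ∈ I := I.sub_mem hy hx
  have hxy : y = x + (y - x) := by ring
  have h : hI.dpow (m + 1) (x + (y - x)) = _ := hI.dpow_add' hx hz
  rw [← hxy] at h
  rw [Finset.sum_range_succ, Finset.sum_range_succ] at h
  have key : hI.dpow (m + 1) y - hI.dpow (m + 1) x - hI.dpow m x * (y - x) =
      (Finset.range m).sum fun k ↦ hI.dpow k x * hI.dpow (m + 1 - k) (y - x) := by
    rw [h, show m + 1 - m = 1 from by omega, show m + 1 - (m + 1) = 0 from by omega,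
      hI.dpow_zero hz, hI.dpow_one hz, mul_one]
    ring
  rw [key]
  apply Ideal.sum_mem
  intro k hk
  rw [Finset.mem_range] at hk
  exact Ideal.mul_mem_left _ _ (Ideal.subset_span ⟨m + 1 - k, by omega, rfl⟩)
end

section
/- Let A be a commutative ring, I an ideal of A, and hI a divided power structure on I. For all x, y ∈ I and all natural numbers l, r with l ≥ 1 and r ≥ 1, the element hI.dpow l x · hI.dpow r y − binom(l+r−1, l−1) · hI.dpow (l+r) x − binom(l+r−1, l) · hI.dpow (l+r) y lies in the ideal of A generated by the set {hI.dpow m (x − y) : m ≥ 2}. -/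
private lemma dpow_key {A : Type*} [CommRing A] {I : Ideal A}
    (hI : DividedPowers I) {x y : A} (hx : x ∈ I) (hy : y ∈ I) (m : ℕ) :
    hI.dpow (m + 1) x - hI.dpow (m + 1) y - (x - y) * hI.dpow m y ∈
      Ideal.span {a : A | ∃ k : ℕ, 2 ≤ k ∧ a = hI.dpow k (x - y)} := by
  have ht : x - y ∈ I := I.sub_mem hx hy
  have hxe : x = (x - y) + y := by ring
  have hexp := hI.dpow_add' (n := m + 1) ht hy
  rw [← hxe] at hexp
  rw [Finset.sum_range_succ'] at hexp
  rw [Finset.sum_range_succ'] at hexp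
  simp only [hI.dpow_zero ht, hI.dpow_one ht, Nat.add_sub_cancel, one_mul] at hexp
  have : hI.dpow (m + 1) x - hI.dpow (m + 1) y - (x - y) * hI.dpow m y =
      ∑ i ∈ Finset.range m, hI.dpow (i + 1 + 1) (x - y) * hI.dpow (m + 1 - (i + 1 + 1)) y := by
    rw [hexp]; simp only [Nat.sub_zero]; ring
  rw [this]
  apply Ideal.sum_mem
  intro i _
  apply Ideal.mul_mem_right
  apply Ideal.subset_span
  exact ⟨i + 2, by omega, by ring_nf⟩

theorem dpow_mul_dpow_mem_span {A : Type*} [CommRing A] {I : Ideal A}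
    (hI : DividedPowers I) {x y : A} (hx : x ∈ I) (hy : y ∈ I)
    {l r : ℕ} (hl : 1 ≤ l) (hr : 1 ≤ r) :
    hI.dpow l x * hI.dpow r y
        - (Nat.choose (l + r - 1) (l - 1) : A) * hI.dpow (l + r) x
        - (Nat.choose (l + r - 1) l : A) * hI.dpow (l + r) y ∈
      Ideal.span {a : A | ∃ m : ℕ, 2 ≤ m ∧ a = hI.dpow m (x - y)} := by
  obtain ⟨a, rfl⟩ : ∃ a, l = a + 1 := ⟨l - 1, by omega⟩
  obtain ⟨b, rfl⟩ : ∃ b, r = b + 1 := ⟨r - 1, by omega⟩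
  have h1 := dpow_key hI hx hy a
  have h2 := dpow_key hI hx hy (a + b + 1)
  have m1 := hI.mul_dpow (m := a + 1) (n := b + 1) hy
  have m2 := hI.mul_dpow (m := a) (n := b + 1) hy
  have hc : (Nat.choose (a + b + 2) (a + 1) : A) =
      (Nat.choose (a + b + 1) a : A) + (Nat.choose (a + b + 1) (a + 1) : A) := by
    rw [← Nat.cast_add, ← Nat.choose_succ_succ]
  have key : hI.dpow (a + 1) x * hI.dpow (b + 1) y
        - (Nat.choose (a + 1 + (b + 1) - 1) (a + 1 - 1) : A) * hI.dpow (a + 1 + (b + 1)) x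
        - (Nat.choose (a + 1 + (b + 1) - 1) (a + 1) : A) * hI.dpow (a + 1 + (b + 1)) y =
      (hI.dpow (a + 1) x - hI.dpow (a + 1) y - (x - y) * hI.dpow a y) * hI.dpow (b + 1) y
        - (Nat.choose (a + b + 1) a : A) *
          (hI.dpow (a + b + 1 + 1) x - hI.dpow (a + b + 1 + 1) y
            - (x - y) * hI.dpow (a + b + 1) y) := by
    simp only [show a + 1 + (b + 1) - 1 = a + b + 1 from by omega,
      show a + 1 - 1 = a from by omega,
      show a + 1 + (b + 1) = a + b + 2 from by omega,
      show a + (b + 1) = a + b + 1 from by omega,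
      show a + b + 1 + 1 = a + b + 2 from by omega,
      show a + b + 2 - 1 = a + b + 1 from by omega] at m1 m2 ⊢
    linear_combination m1 + (x - y) * m2 + hI.dpow (a + b + 2) y * hc
  rw [key]
  exact Ideal.sub_mem _ (Ideal.mul_mem_right _ _ h1) (Ideal.mul_mem_left _ _ h2)
end

section
/- Let A be a commutative ring, I an ideal of A, and hI a divided power structure on I. For all x, y ∈ I and every natural number m, the element (hI.dpow m x) · y − m · hI.dpow (m+1) x − hI.dpow (m+1) y lies in the ideal of A generated by the set {hI.dpow l (x − y) : l ≥ 2}. -/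
theorem dpow_mul_self_mem_span {A : Type*} [CommRing A] {I : Ideal A}
    (hI : DividedPowers I) {x y : A} (hx : x ∈ I) (hy : y ∈ I) (m : ℕ) :
    hI.dpow m x * y - (m : A) * hI.dpow (m + 1) x - hI.dpow (m + 1) y ∈
      Ideal.span {a : A | ∃ l : ℕ, 2 ≤ l ∧ a = hI.dpow l (x - y)} := by
  set J := Ideal.span {a : A | ∃ l : ℕ, 2 ≤ l ∧ a = hI.dpow l (x - y)} with hJ
  have hd : x - y ∈ I := I.sub_mem hx hy
  have key : ∀ n : ℕ,
      hI.dpow (n + 1) x - hI.dpow (n + 1) y - (x - y) * hI.dpow n y ∈ J := by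
    intro n
    have hx' : hI.dpow (n + 1) x = hI.dpow (n + 1) ((x - y) + y) := by ring_nf
    rw [hx', hI.dpow_add' (n := n + 1) hd hy, Finset.sum_range_succ', Finset.sum_range_succ',
      hI.dpow_zero hd, hI.dpow_one hd]
    simp only [Nat.add_sub_cancel, one_mul, Nat.sub_zero]
    have : ∀ i : ℕ, hI.dpow (i + 1 + 1) (x - y) * hI.dpow (n + 1 - (i + 1 + 1)) y ∈ J := by
      intro i
      exact Ideal.mul_mem_right _ _ (Ideal.subset_span ⟨i + 2, by omega, rfl⟩)
    have hsum : (Finset.range n).sum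
        (fun i ↦ hI.dpow (i + 1 + 1) (x - y) * hI.dpow (n + 1 - (i + 1 + 1)) y) ∈ J :=
      Ideal.sum_mem _ fun i _ ↦ this i
    convert hsum using 1
    ring
  have hyy : ∀ n : ℕ, hI.dpow n y * y = ((n : A) + 1) * hI.dpow (n + 1) y := by
    intro n
    nth_rewrite 2 [← hI.dpow_one hy]
    rw [hI.mul_dpow (m := n) (n := 1) hy, Nat.choose_succ_self_right]
    push_cast
    ring
  match m with
  | 0 =>
    simp only [Nat.cast_zero, zero_mul, hI.dpow_zero hx, one_mul, hI.dpow_one hy, zero_add]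
    simp
  | k + 1 =>
    have E1 := key k
    have E2 := key (k + 1)
    have h1 := hyy k
    have h2 := hyy (k + 1)
    have goal_eq : hI.dpow (k + 1) x * y - ((k + 1 : ℕ) : A) * hI.dpow (k + 1 + 1) x -
        hI.dpow (k + 1 + 1) y =
        (hI.dpow (k + 1) x - hI.dpow (k + 1) y - (x - y) * hI.dpow k y) * y -
        ((k + 1 : ℕ) : A) *
          (hI.dpow (k + 1 + 1) x - hI.dpow (k + 1 + 1) y - (x - y) * hI.dpow (k + 1) y) := by
      push_cast at h1 h2 ⊢
      linear_combination h2 + (x - y) * h1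
    rw [goal_eq]
    exact J.sub_mem (Ideal.mul_mem_right _ _ E1) (Ideal.mul_mem_left _ _ E2)
end

section
/- Let A be a commutative ring, I an ideal of A, hI a divided power structure on I, and x : Fin k → A a family of elements of I. Let K be the ideal of A generated by the set {hI.dpow m (x i − x j) : i, j ∈ Fin k, m ≥ 2}, and let S be the additive subgroup of A generated by 1 together with all elements hI.dpow m (x i) for i ∈ Fin k and m ≥ 1. Then the subring of A generated by the set {hI.dpow m (x i) : i ∈ Fin k, m ≥ 1} is contained in the sum S + K (sum of additive subgroups of A). -/
open Pointwise

theorem subring_closure_dpow_subset {A : Type*} [CommRing A] {I : Ideal A}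
    (hI : DividedPowers I) {k : ℕ} (x : Fin k → A) (hx : ∀ i, x i ∈ I) :
    let K : Ideal A :=
      Ideal.span {a : A | ∃ i j : Fin k, ∃ m : ℕ, 2 ≤ m ∧ a = hI.dpow m (x i - x j)}
    let S : AddSubgroup A :=
      AddSubgroup.closure ({1} ∪ {a : A | ∃ i : Fin k, ∃ m : ℕ, 1 ≤ m ∧ a = hI.dpow m (x i)})
    (Subring.closure {a : A | ∃ i : Fin k, ∃ m : ℕ, 1 ≤ m ∧ a = hI.dpow m (x i)} : Set A) ⊆
      (S : Set A) + (K : Set A) := by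
  intro K S
  have hKgen : ∀ (i j : Fin k) (m : ℕ), 2 ≤ m → hI.dpow m (x i - x j) ∈ K :=
    fun i j m hm => Ideal.subset_span ⟨i, j, m, hm, rfl⟩
  set G : Set A := {a : A | ∃ i : Fin k, ∃ m : ℕ, 1 ≤ m ∧ a = hI.dpow m (x i)} with hG
  set M : AddSubgroup A := S ⊔ K.toAddSubgroup with hM
  have hSM : ∀ a ∈ S, a ∈ M := fun a ha => AddSubgroup.mem_sup_left ha
  have hKM : ∀ a ∈ K, a ∈ M := fun a ha => AddSubgroup.mem_sup_right ha
  have hSpure : ∀ (i : Fin k) (m : ℕ), 1 ≤ m → hI.dpow m (x i) ∈ S :=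
    fun i m hm => AddSubgroup.subset_closure (Or.inr ⟨i, m, hm, rfl⟩)
  -- key lemma: dpow (s+1) (x i) - dpow (s+1) (x j) ≡ dpow s (x j) * (x i - x j) mod K
  have lemA : ∀ (i j : Fin k) (s : ℕ),
      hI.dpow (s + 1) (x i) - hI.dpow (s + 1) (x j)
        - hI.dpow s (x j) * (x i - x j) ∈ K := by
    intro i j s
    have hd : x i - x j ∈ I := I.sub_mem (hx i) (hx j)
    have he : x j + (x i - x j) = x i := by ring
    have h := hI.dpow_add' (n := s + 1) (hx j) hd
    rw [he] at h
    rw [Finset.sum_range_succ, Finset.sum_range_succ] at h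
    have h0 : s + 1 - s = 1 := by omega
    have h1 : s + 1 - (s + 1) = 0 := by omega
    rw [h0, h1, hI.dpow_one hd, hI.dpow_zero hd, mul_one] at h
    have heq : hI.dpow (s + 1) (x i) - hI.dpow (s + 1) (x j)
        - hI.dpow s (x j) * (x i - x j)
        = ∑ l ∈ Finset.range s, hI.dpow l (x j) * hI.dpow (s + 1 - l) (x i - x j) := by
      rw [h]; ring
    rw [heq]
    exact K.sum_mem fun l hl =>
      K.mul_mem_left _ (hKgen i j _ (by have := Finset.mem_range.mp hl; omega))
  -- consequence: dpow s (x j) * (x i - x j) ∈ M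
  have lemB : ∀ (i j : Fin k) (s : ℕ), hI.dpow s (x j) * (x i - x j) ∈ M := by
    intro i j s
    have h := lemA i j s
    have heq : hI.dpow s (x j) * (x i - x j)
        = (hI.dpow (s + 1) (x i) - hI.dpow (s + 1) (x j))
          - (hI.dpow (s + 1) (x i) - hI.dpow (s + 1) (x j)
            - hI.dpow s (x j) * (x i - x j)) := by ring
    rw [heq]
    exact M.sub_mem
      (hSM _ (S.sub_mem (hSpure i (s + 1) (by omega)) (hSpure j (s + 1) (by omega))))
      (hKM _ h)
  -- product of two pure divided powers lies in M
  have hprod : ∀ (i j : Fin k) (l r : ℕ), 1 ≤ l → 1 ≤ r →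
      hI.dpow l (x i) * hI.dpow r (x j) ∈ M := by
    intro i j l r hl hr
    obtain ⟨r', rfl⟩ : ∃ r', r = r' + 1 := ⟨r - 1, by omega⟩
    have hA := lemA j i r'
    have heq : hI.dpow l (x i) * hI.dpow (r' + 1) (x j)
        = hI.dpow l (x i) * hI.dpow (r' + 1) (x i)
          + hI.dpow l (x i) * hI.dpow r' (x i) * (x j - x i)
          + hI.dpow l (x i) * (hI.dpow (r' + 1) (x j) - hI.dpow (r' + 1) (x i)
            - hI.dpow r' (x i) * (x j - x i)) := by ring
    rw [heq]
    refine M.add_mem (M.add_mem ?_ ?_) (hKM _ (K.mul_mem_left _ hA))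
    · rw [hI.mul_dpow (m := l) (n := r' + 1) (hx i), ← nsmul_eq_mul]
      exact hSM _ (S.nsmul_mem (hSpure i _ (by omega)) _)
    · rw [hI.mul_dpow (m := l) (n := r') (hx i), mul_assoc, ← nsmul_eq_mul]
      exact M.nsmul_mem (lemB j i (l + r')) _
  -- any element of S times a generator of S lies in M
  have hmulgen : ∀ g ∈ ({1} ∪ G : Set A), ∀ a ∈ S, a * g ∈ M := by
    intro g hg a ha
    refine AddSubgroup.closure_induction (p := fun a _ => a * g ∈ M) ?_ ?_ ?_ ?_ ha
    · rintro b (hb | hb)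
      · simp only [Set.mem_singleton_iff] at hb
        subst hb
        rw [one_mul]
        exact hSM _ (AddSubgroup.subset_closure hg)
      · rcases hg with hg | hg
        · simp only [Set.mem_singleton_iff] at hg
          subst hg
          rw [mul_one]
          exact hSM _ (AddSubgroup.subset_closure (Or.inr hb))
        · obtain ⟨i, m, hm, rfl⟩ := hb
          obtain ⟨j, r, hr, rfl⟩ := hg
          exact hprod i j m r hm hr
    · show (0 : A) * g ∈ M
      rw [zero_mul]; exact M.zero_mem
    · intro b c _ _ hb hc
      show (b + c) * g ∈ M
      rw [add_mul]; exact M.add_mem hb hc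
    · intro b _ hb
      show -b * g ∈ M
      rw [neg_mul]; exact M.neg_mem hb
  -- S * S ⊆ M
  have hSS : ∀ b ∈ S, ∀ a ∈ S, a * b ∈ M := by
    intro b hb
    refine AddSubgroup.closure_induction (p := fun b _ => ∀ a ∈ S, a * b ∈ M) ?_ ?_ ?_ ?_ hb
    · intro g hg a ha
      exact hmulgen g hg a ha
    · intro a ha
      show a * 0 ∈ M
      rw [mul_zero]; exact M.zero_mem
    · intro b c _ _ hb' hc' a ha
      show a * (b + c) ∈ M
      rw [mul_add]; exact M.add_mem (hb' a ha) (hc' a ha)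
    · intro b _ hb' a ha
      show a * -b ∈ M
      rw [mul_neg]; exact M.neg_mem (hb' a ha)
  -- main: the subring closure is contained in M
  have hmain : ∀ a ∈ Subring.closure G, a ∈ M := by
    intro a ha
    refine Subring.closure_induction (p := fun a _ => a ∈ M) ?_ ?_ ?_ ?_ ?_ ?_ ha
    · intro b hb
      exact hSM _ (AddSubgroup.subset_closure (Or.inr hb))
    · exact M.zero_mem
    · exact hSM _ (AddSubgroup.subset_closure (Or.inl rfl))
    · intro b c _ _ hb hc
      exact M.add_mem hb hc
    · intro b _ hb
      exact M.neg_mem hb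
    · intro b c _ _ hb hc
      show b * c ∈ M
      replace hb : b ∈ M := hb
      replace hc : c ∈ M := hc
      rw [hM, AddSubgroup.mem_sup] at hb hc
      obtain ⟨s, hs, κ, hκ, rfl⟩ := hb
      obtain ⟨s', hs', κ', hκ', rfl⟩ := hc
      have heq : (s + κ) * (s' + κ') = s * s' + (s * κ' + κ * s' + κ * κ') := by ring
      rw [heq]
      refine M.add_mem (hSS s' hs' s hs) (hKM _ ?_)
      exact K.add_mem (K.add_mem (K.mul_mem_left _ hκ') (K.mul_mem_right _ hκ))
        (K.mul_mem_left _ hκ')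
  intro a ha
  have h := hmain a ha
  rw [hM, AddSubgroup.mem_sup] at h
  obtain ⟨s, hs, κ, hκ, hsum⟩ := h
  exact ⟨s, hs, κ, hκ, hsum⟩
end

section
/- For every natural number n, the 2-adic norm of the element 2^(2^n) / (2^n)! of ℚ_2 equals 1/2. -/
open Nat

lemma padicValNat_two_pow_factorial (n : ℕ) :
    padicValNat 2 ((2 ^ n)!) = 2 ^ n - 1 := by
  induction n with
  | zero => simp
  | succ k ih =>
    have : (2 : ℕ) ^ (k + 1) = 2 * 2 ^ k := by ring
    rw [this, padicValNat_factorial_mul, ih]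
    have h1 : 1 ≤ 2 ^ k := Nat.one_le_two_pow
    omega

theorem norm_two_pow_div_factorial (n : ℕ) :
    ‖((2 : ℚ_[2]) ^ (2 ^ n) / ((2 ^ n)! : ℚ_[2]))‖ = 1 / 2 := by
  have hfac : ((2 ^ n)! : ℚ_[2]) ≠ 0 := by
    exact_mod_cast Nat.cast_ne_zero.mpr (Nat.factorial_ne_zero _)
  rw [norm_div, norm_pow]
  have h2 : ‖(2 : ℚ_[2])‖ = 2⁻¹ := by
    have := @Padic.norm_p 2 ⟨Nat.prime_two⟩
    simpa using this
  have hfn : ‖(((2 ^ n)! : ℕ) : ℚ_[2])‖ = (2 : ℝ) ^ (-(padicValNat 2 ((2 ^ n)!) : ℤ)) := by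
    rw [Padic.norm_eq_zpow_neg_valuation hfac, Padic.valuation_natCast]
    norm_num
  rw [show (((2 ^ n)! : ℚ_[2])) = (((2 ^ n)! : ℕ) : ℚ_[2]) by norm_cast] at *
  rw [hfn, h2, padicValNat_two_pow_factorial]
  have h1 : 1 ≤ 2 ^ n := Nat.one_le_two_pow
  rw [inv_pow, ← zpow_natCast (2:ℝ), ← zpow_neg]
  have he : (-((2 ^ n : ℕ) : ℤ)) = -1 + -((2 ^ n - 1 : ℕ) : ℤ) := by push_cast [h1]; ring
  rw [he, zpow_add₀ (by norm_num : (2:ℝ) ≠ 0)]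
  norm_num
  rw [mul_div_assoc, div_self (by positivity), mul_one]
end
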